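/- Let S and A be finite nonempty sets, let γ ∈ [0,1), let P : S × A → (S → ℝ) be a stochastic kernel, let R : S × A → ℝ satisfy |R(s,a)| ≤ R_max for all (s,a), and let π₁, π₂ : S → (A → ℝ) assign to each state a probability distribution on A. Suppose V₁, V₂ : S → ℝ satisfy the Bellman equations V_i(s) = ∑_{a∈A} π_i(a|s)·(R(s,a) + γ·∑_{s'∈S} P(s'|s,a)·V_i(s')) for i = 1,2 and all s ∈ S. Then max_{s∈S} |V₁(s) − V₂(s)| ≤ (2·R_max/(1−γ)²)·max_{s∈S} TV(π₁(·|s), π₂(·|s)). -/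
import Mathlib


/-- value difference bound via policy total variation:
if `V₁, V₂` are the Bellman values of policies `π₁, π₂` in a discounted MDP
with rewards bounded by `R_max`, then
`max_s |V₁(s) − V₂(s)| ≤ (2·R_max/(1−γ)²)·max_s TV(π₁(·|s), π₂(·|s))`. -/
theorem value_difference_bound_via_policy_tv
    {S : Type*} {A : Type*} [Fintype S] [Fintype A] [Nonempty S] [Nonempty A]
    (γ : ℝ) (hγ : γ ∈ Set.Ico (0 : ℝ) 1)
    (P : S × A → S → ℝ)
    (hPnonneg : ∀ p s', 0 ≤ P p s') (hPsum : ∀ p, ∑ s', P p s' = 1)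
    (R : S × A → ℝ) (Rmax : ℝ) (hR : ∀ p, |R p| ≤ Rmax)
    (π₁ π₂ : S → A → ℝ)
    (hπ₁nonneg : ∀ s a, 0 ≤ π₁ s a) (hπ₁sum : ∀ s, ∑ a, π₁ s a = 1)
    (hπ₂nonneg : ∀ s a, 0 ≤ π₂ s a) (hπ₂sum : ∀ s, ∑ a, π₂ s a = 1)
    (V₁ V₂ : S → ℝ)
    (hV₁ : ∀ s, V₁ s = ∑ a, π₁ s a * (R (s, a) + γ * ∑ s', P (s, a) s' * V₁ s'))
    (hV₂ : ∀ s, V₂ s = ∑ a, π₂ s a * (R (s, a) + γ * ∑ s', P (s, a) s' * V₂ s')) :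
    Finset.univ.sup' Finset.univ_nonempty (fun s : S => |V₁ s - V₂ s|) ≤
      (2 * Rmax / (1 - γ) ^ 2) *
        Finset.univ.sup' Finset.univ_nonempty
          (fun s : S => (1 / 2) * ∑ a, |π₁ s a - π₂ s a|) := by
  obtain ⟨hγ0, hγ1⟩ := hγ
  have h1γ : 0 < 1 - γ := by linarith
  have hRmax0 : 0 ≤ Rmax := le_trans (abs_nonneg _) (hR (Classical.arbitrary _))
  set D := Finset.univ.sup' Finset.univ_nonempty (fun s : S => |V₁ s - V₂ s|) with hDdef
  set ε := Finset.univ.sup' Finset.univ_nonempty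
      (fun s : S => (1 / 2) * ∑ a, |π₁ s a - π₂ s a|) with hεdef
  have hε0 : 0 ≤ ε := by
    refine le_trans ?_ (Finset.le_sup' _ (Finset.mem_univ (Classical.arbitrary S)))
    positivity
  set M := Finset.univ.sup' Finset.univ_nonempty (fun s : S => |V₂ s|) with hMdef
  have hDle : ∀ s, |V₁ s - V₂ s| ≤ D := fun s => Finset.le_sup' (fun s : S => |V₁ s - V₂ s|) (Finset.mem_univ s)
  have hMle : ∀ s, |V₂ s| ≤ M := fun s => Finset.le_sup' (fun s : S => |V₂ s|) (Finset.mem_univ s)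
  have hD0 : 0 ≤ D := le_trans (abs_nonneg _) (hDle (Classical.arbitrary _))
  have hPVbound : ∀ (s : S) (a : A) (W : S → ℝ) (C : ℝ),
      (∀ s', |W s'| ≤ C) → |∑ s', P (s, a) s' * W s'| ≤ C := by
    intro s a W C hW
    calc |∑ s', P (s, a) s' * W s'| ≤ ∑ s', |P (s, a) s' * W s'| :=
          Finset.abs_sum_le_sum_abs _ _
      _ ≤ ∑ s', P (s, a) s' * C := by
          apply Finset.sum_le_sum
          intro s' _
          rw [abs_mul, abs_of_nonneg (hPnonneg _ _)]
          exact mul_le_mul_of_nonneg_left (hW s') (hPnonneg _ _)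
      _ = C := by rw [← Finset.sum_mul, hPsum, one_mul]
  have hMbound : M ≤ Rmax / (1 - γ) := by
    have key : M ≤ Rmax + γ * M := by
      apply Finset.sup'_le
      intro s _
      rw [hV₂ s]
      calc |∑ a, π₂ s a * (R (s, a) + γ * ∑ s', P (s, a) s' * V₂ s')|
          ≤ ∑ a, |π₂ s a * (R (s, a) + γ * ∑ s', P (s, a) s' * V₂ s')| :=
            Finset.abs_sum_le_sum_abs _ _
        _ ≤ ∑ a, π₂ s a * (Rmax + γ * M) := by
            apply Finset.sum_le_sum
            intro a _
            rw [abs_mul, abs_of_nonneg (hπ₂nonneg s a)]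
            refine mul_le_mul_of_nonneg_left ?_ (hπ₂nonneg s a)
            calc |R (s, a) + γ * ∑ s', P (s, a) s' * V₂ s'|
                ≤ |R (s, a)| + |γ * ∑ s', P (s, a) s' * V₂ s'| := abs_add_le _ _
              _ ≤ Rmax + γ * M := by
                  rw [abs_mul, abs_of_nonneg hγ0]
                  exact add_le_add (hR _)
                    (mul_le_mul_of_nonneg_left (hPVbound s a V₂ M hMle) hγ0)
        _ = Rmax + γ * M := by rw [← Finset.sum_mul, hπ₂sum, one_mul]
    rw [le_div_iff₀ h1γ]
    nlinarith
  have hQbound : ∀ s a, |R (s, a) + γ * ∑ s', P (s, a) s' * V₂ s'| ≤ Rmax / (1 - γ) := by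
    intro s a
    calc |R (s, a) + γ * ∑ s', P (s, a) s' * V₂ s'|
        ≤ |R (s, a)| + |γ * ∑ s', P (s, a) s' * V₂ s'| := abs_add_le _ _
      _ ≤ Rmax + γ * M := by
          rw [abs_mul, abs_of_nonneg hγ0]
          exact add_le_add (hR _)
            (mul_le_mul_of_nonneg_left (hPVbound s a V₂ M hMle) hγ0)
      _ ≤ Rmax / (1 - γ) := by
          have hM1 : M * (1 - γ) ≤ Rmax := (le_div_iff₀ h1γ).mp hMbound
          rw [le_div_iff₀ h1γ]
          nlinarith
  have key : ∀ s, |V₁ s - V₂ s| ≤ 2 * ε * (Rmax / (1 - γ)) + γ * D := by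
    intro s
    have hinner : ∀ a : A, ∑ s', P (s, a) s' * (V₁ s' - V₂ s') =
        (∑ s', P (s, a) s' * V₁ s') - ∑ s', P (s, a) s' * V₂ s' := by
      intro a
      rw [← Finset.sum_sub_distrib]
      exact Finset.sum_congr rfl fun s' _ => by ring
    have hid : V₁ s - V₂ s =
        ∑ a, ((π₁ s a - π₂ s a) * (R (s, a) + γ * ∑ s', P (s, a) s' * V₂ s')
          + π₁ s a * (γ * ∑ s', P (s, a) s' * (V₁ s' - V₂ s'))) := by
      rw [hV₁ s, hV₂ s, ← Finset.sum_sub_distrib]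
      refine Finset.sum_congr rfl fun a _ => ?_
      rw [hinner a]; ring
    rw [hid]
    calc |∑ a, ((π₁ s a - π₂ s a) * (R (s, a) + γ * ∑ s', P (s, a) s' * V₂ s')
          + π₁ s a * (γ * ∑ s', P (s, a) s' * (V₁ s' - V₂ s')))|
        ≤ ∑ a, |(π₁ s a - π₂ s a) * (R (s, a) + γ * ∑ s', P (s, a) s' * V₂ s')
          + π₁ s a * (γ * ∑ s', P (s, a) s' * (V₁ s' - V₂ s'))| :=
          Finset.abs_sum_le_sum_abs _ _
      _ ≤ ∑ a, (|π₁ s a - π₂ s a| * (Rmax / (1 - γ)) + π₁ s a * (γ * D)) := by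
          apply Finset.sum_le_sum
          intro a _
          refine le_trans (abs_add_le _ _) (add_le_add ?_ ?_)
          · rw [abs_mul]
            exact mul_le_mul_of_nonneg_left (hQbound s a) (abs_nonneg _)
          · rw [abs_mul, abs_of_nonneg (hπ₁nonneg s a), abs_mul, abs_of_nonneg hγ0]
            refine mul_le_mul_of_nonneg_left ?_ (hπ₁nonneg s a)
            exact mul_le_mul_of_nonneg_left
              (hPVbound s a (fun s' => V₁ s' - V₂ s') D hDle) hγ0
      _ = (∑ a, |π₁ s a - π₂ s a|) * (Rmax / (1 - γ)) + γ * D := by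
          rw [Finset.sum_add_distrib, ← Finset.sum_mul, ← Finset.sum_mul, hπ₁sum, one_mul]
      _ ≤ 2 * ε * (Rmax / (1 - γ)) + γ * D := by
          have htv : (1 / 2) * ∑ a, |π₁ s a - π₂ s a| ≤ ε :=
            Finset.le_sup' (fun s : S => (1 / 2) * ∑ a, |π₁ s a - π₂ s a|) (Finset.mem_univ s)
          have : (∑ a, |π₁ s a - π₂ s a|) ≤ 2 * ε := by linarith
          have hq : 0 ≤ Rmax / (1 - γ) := by positivity
          nlinarith
  have hfinal : D ≤ 2 * ε * (Rmax / (1 - γ)) + γ * D :=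
    Finset.sup'_le _ _ fun s _ => key s
  rw [div_mul_eq_mul_div, le_div_iff₀ (by positivity)]
  have hc : Rmax / (1 - γ) * (1 - γ) = Rmax := div_mul_cancel₀ _ (ne_of_gt h1γ)
  nlinarith [hfinal, mul_le_mul_of_nonneg_right hfinal (le_of_lt h1γ)]
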